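/- For every β ∈ [0,1] and every y > 2, the inverse of the Young function Φ_β(x) = |x|·(log(1+|x|))^β satisfies y/(log(1+y))^β ≤ Φ_β^{-1}(y) ≤ 2·y/(log(1+y))^β. -/
import Mathlib


open Real

theorem statement_0 (β : ℝ) (hβ : β ∈ Set.Icc (0:ℝ) 1)
    (Φ : ℝ → ℝ) (hΦ : ∀ x, Φ x = |x| * (Real.log (1 + |x|)) ^ β)
    (y : ℝ) (hy : 2 < y) :
    ∀ z : ℝ, 0 ≤ z → Φ z = y →
      y / (Real.log (1 + y)) ^ β ≤ z ∧ z ≤ 2 * y / (Real.log (1 + y)) ^ β := by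
  obtain ⟨hβ0, hβ1⟩ := hβ
  intro z hz hΦz
  rw [hΦ z, abs_of_nonneg hz] at hΦz
  set L := Real.log (1 + z) with hL
  set M := Real.log (1 + y) with hM
  have hy0 : (0:ℝ) < y := by linarith
  have hLnn : 0 ≤ L := Real.log_nonneg (by linarith)
  have hMpos : 0 < M := Real.log_pos (by linarith)
  have hMb : 0 < M ^ β := Real.rpow_pos_of_pos hMpos β
  have hzy : z ≤ y := by
    by_contra h
    push_neg at h
    have h2z : 2 < z := lt_trans hy h
    have hL1 : 1 ≤ L := by
      rw [hL]
      have he : Real.exp 1 ≤ 1 + z := by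
        have := Real.exp_one_lt_d9
        linarith
      calc (1:ℝ) = Real.log (Real.exp 1) := (Real.log_exp 1).symm
        _ ≤ Real.log (1 + z) := Real.log_le_log (Real.exp_pos 1) he
    have h1 : 1 ≤ L ^ β := Real.one_le_rpow hL1 hβ0
    nlinarith
  have hLM : L ≤ M := Real.log_le_log (by linarith) (by linarith)
  have lower : y ≤ z * M ^ β := by
    have h1 : L ^ β ≤ M ^ β := Real.rpow_le_rpow hLnn hLM hβ0
    nlinarith
  have hLz : L ≤ z := by
    have he := Real.add_one_le_exp z
    rw [hL]
    calc Real.log (1+z) ≤ Real.log (Real.exp z) :=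
          Real.log_le_log (by linarith) (by linarith)
      _ = z := Real.log_exp z
  have hLb_le : L ^ β ≤ 1 + L := by
    rcases le_total L 1 with h | h
    · have := Real.rpow_le_one hLnn h hβ0
      linarith
    · have h2 : L ^ β ≤ L ^ (1:ℝ) := Real.rpow_le_rpow_of_exponent_le h hβ1
      rw [Real.rpow_one] at h2
      linarith
  have hM2L : M ≤ 2 * L := by
    have h1y : 1 + y ≤ (1 + z)^2 := by nlinarith
    calc M = Real.log (1 + y) := hM
      _ ≤ Real.log ((1+z)^2) := Real.log_le_log (by linarith) h1y
      _ = 2 * Real.log (1+z) := by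
          rw [Real.log_pow]; push_cast; ring
      _ = 2 * L := rfl
  have upper : z * M ^ β ≤ 2 * y := by
    have h1 : M ^ β ≤ (2*L) ^ β := Real.rpow_le_rpow (le_of_lt hMpos) hM2L hβ0
    have h2 : (2*L) ^ β = 2 ^ β * L ^ β := Real.mul_rpow (by norm_num) hLnn
    have h3 : (2:ℝ) ^ β ≤ 2 := by
      calc (2:ℝ) ^ β ≤ 2 ^ (1:ℝ) := Real.rpow_le_rpow_of_exponent_le one_le_two hβ1
        _ = 2 := Real.rpow_one 2
    have hLbnn : 0 ≤ L ^ β := Real.rpow_nonneg hLnn β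
    nlinarith
  constructor
  · rw [div_le_iff₀ hMb]; linarith
  · rw [le_div_iff₀ hMb]; linarith
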